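/- Let F be a field, q ∈ F, and s, t ≥ 1 natural numbers with q + 1 ≠ 0, q²(s−1)(t−1) − 1 ≠ 0, and (q+1)²(s−1)(t−1) ≠ s·t in F. Then the q-distance matrix D of K_{s,t} is invertible and D⁻¹ = −L + λ⁻¹·x·xᵀ, where L, x and λ are as defined in the context and x·xᵀ is the rank-one matrix with (u,v)-entry x(u)·x(v). -/

import Mathlib

/-- The `q`-distance matrix of the complete bipartite graph `K_{s,t}`,
indexed by `Fin s ⊕ Fin t`: diagonal entries are `0`, entries between the two
parts are `1`, and off-diagonal entries within a part are `q + 1`. -/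
def qDistKst (F : Type*) [Field F] (q : F) (s t : ℕ) :
    Matrix (Fin s ⊕ Fin t) (Fin s ⊕ Fin t) F :=
  Matrix.of fun u v =>
    if u = v then 0 else if u.isLeft = v.isLeft then q + 1 else 1

/-- The special vector `x` of `K_{s,t}`. -/
def xVecKst (F : Type*) [Field F] (q : F) (s t : ℕ) :
    Fin s ⊕ Fin t → F :=
  Sum.elim
    (fun _ => (q * ((t : F) - 1) - 1) /
      ((q + 1) * (q ^ 2 * ((s : F) - 1) * ((t : F) - 1) - 1)))
    (fun _ => (q * ((s : F) - 1) - 1) /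
      ((q + 1) * (q ^ 2 * ((s : F) - 1) * ((t : F) - 1) - 1)))

/-- The scalar `λ` of `K_{s,t}`. -/
def lamKst (F : Type*) [Field F] (q : F) (s t : ℕ) : F :=
  ((q + 1) ^ 2 * ((s : F) - 1) * ((t : F) - 1) - (s : F) * (t : F)) /
    ((q + 1) * (q ^ 2 * ((s : F) - 1) * ((t : F) - 1) - 1))

/-- The matrix `C` in the definition of the Laplacian-like matrix `ℒ` of
`K_{s,t}`. -/
def cMatKst (F : Type*) [Field F] (q : F) (s t : ℕ) :
    Matrix (Fin s ⊕ Fin t) (Fin s ⊕ Fin t) F :=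
  Matrix.of fun u v =>
    match u, v with
    | Sum.inl _, Sum.inl _ => -q ^ 2 * ((t : F) - 1)
    | Sum.inr _, Sum.inr _ => -q ^ 2 * ((s : F) - 1)
    | _, _ => q

/-- The Laplacian-like matrix `ℒ` of `K_{s,t}`. -/
def lapKst (F : Type*) [Field F] (q : F) (s t : ℕ) :
    Matrix (Fin s ⊕ Fin t) (Fin s ⊕ Fin t) F :=
  (1 / ((q + 1) * (q ^ 2 * ((s : F) - 1) * ((t : F) - 1) - 1))) • cMatKst F q s t
    + (1 / (q + 1)) • (1 : Matrix (Fin s ⊕ Fin t) (Fin s ⊕ Fin t) F)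

section AuxBlock

def bMat {F : Type*} [Field F] (s t : ℕ) (a b c d : F) :
    Matrix (Fin s ⊕ Fin t) (Fin s ⊕ Fin t) F :=
  Matrix.of fun u v =>
    match u, v with
    | Sum.inl _, Sum.inl _ => a
    | Sum.inl _, Sum.inr _ => b
    | Sum.inr _, Sum.inl _ => c
    | Sum.inr _, Sum.inr _ => d

theorem bMat_mul {F : Type*} [Field F] {s t : ℕ} (a b c d a' b' c' d' : F) :
    bMat s t a b c d * bMat s t a' b' c' d' =
      bMat s t ((s:F)*(a*a') + (t:F)*(b*c')) ((s:F)*(a*b') + (t:F)*(b*d'))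
        ((s:F)*(c*a') + (t:F)*(d*c')) ((s:F)*(c*b') + (t:F)*(d*d')) := by
  ext u v
  cases u <;> cases v <;>
    simp [bMat, Matrix.mul_apply, Fintype.sum_sum_type, Finset.sum_const, nsmul_eq_mul]

theorem bMat_smul {F : Type*} [Field F] {s t : ℕ} (r a b c d : F) :
    r • bMat s t a b c d = bMat s t (r*a) (r*b) (r*c) (r*d) := by
  ext u v
  cases u <;> cases v <;> simp [bMat]

theorem fracA {F : Type*} [Field F] (c P Q d n : F) (hd : d ≠ 0) (hn : n ≠ 0) :
    c / d + d / n * (P / d * (Q / d)) = (c * n + P * Q) / (d * n) := by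
  field_simp

theorem fracB {F : Type*} [Field F] (c P Q d n : F) (hd : d ≠ 0) (hn : n ≠ 0) :
    -(c / d) + d / n * (P / d * (Q / d)) = (-(c * n) + P * Q) / (d * n) := by
  field_simp

theorem keyA {F : Type*} [Field F] (c1 c2 x y P Q R e dn : F) (hdn : dn ≠ 0) (he : e ≠ 0)
    (h : c1 * (x * P) + c2 * (y * Q) = dn + e * R) :
    c1 * (x * (P / dn)) + c2 * (y * (Q / dn)) = 1 / e * e + e * (R / dn) := by
  field_simp
  linear_combination h

theorem keyB {F : Type*} [Field F] (c1 c2 x y P Q R e dn : F) (hdn : dn ≠ 0) (he : e ≠ 0)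
    (h : e * (c1 * (x * P) + c2 * (y * Q)) = dn + e * (e * R)) :
    c1 * (x * (P / dn)) + c2 * (y * (Q / dn)) = 1 / e * 1 + e * (R / dn) := by
  field_simp
  linear_combination h

end AuxBlock

set_option maxHeartbeats 1000000 in
theorem qDist_inv_eq_neg_lap_add_rankOne' (F : Type*) [Field F] (q : F)
    (s t : ℕ) (hq : q + 1 ≠ 0)
    (hD' : q ^ 2 * ((s : F) - 1) * ((t : F) - 1) - 1 ≠ 0)
    (hst : (q + 1) ^ 2 * ((s : F) - 1) * ((t : F) - 1) ≠ (s : F) * (t : F)) :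
    IsUnit (qDistKst F q s t).det ∧
      (qDistKst F q s t)⁻¹ = -lapKst F q s t +
        (lamKst F q s t)⁻¹ • Matrix.of (fun u v => xVecKst F q s t u * xVecKst F q s t v) := by
  have hN : (q + 1) ^ 2 * ((s : F) - 1) * ((t : F) - 1) - (s : F) * (t : F) ≠ 0 :=
    sub_ne_zero.mpr hst
  set den : F := (q + 1) * (q ^ 2 * ((s : F) - 1) * ((t : F) - 1) - 1) with hden_def
  have hden : den ≠ 0 := mul_ne_zero hq hD'
  set N : F := (q + 1) ^ 2 * ((s : F) - 1) * ((t : F) - 1) - (s : F) * (t : F) with hN_def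
  have hlam : (lamKst F q s t)⁻¹ = den / N := by
    rw [lamKst, inv_div]
  set a : F := (q * ((t : F) - 1) - 1) / den with ha_def
  set b : F := (q * ((s : F) - 1) - 1) / den with hb_def
  set α : F := q ^ 2 * ((t : F) - 1) / den + (den / N) * (a * a) with hα_def
  set β : F := -(q / den) + (den / N) * (a * b) with hβ_def
  set γ : F := q ^ 2 * ((s : F) - 1) / den + (den / N) * (b * b) with hγ_def
  set M : Matrix (Fin s ⊕ Fin t) (Fin s ⊕ Fin t) F :=
    -lapKst F q s t +
      (lamKst F q s t)⁻¹ • Matrix.of (fun u v => xVecKst F q s t u * xVecKst F q s t v)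
    with hM_def
  have hα2 : α = (q ^ 2 * ((t : F) - 1) * N +
      (q * ((t : F) - 1) - 1) * (q * ((t : F) - 1) - 1)) / (den * N) := by
    rw [hα_def, ha_def, fracA _ _ _ _ _ hden hN]
  have hβ2 : β = (-(q * N) + (q * ((t : F) - 1) - 1) * (q * ((s : F) - 1) - 1)) / (den * N) := by
    rw [hβ_def, ha_def, hb_def, fracB _ _ _ _ _ hden hN]
  have hγ2 : γ = (q ^ 2 * ((s : F) - 1) * N +
      (q * ((s : F) - 1) - 1) * (q * ((s : F) - 1) - 1)) / (den * N) := by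
    rw [hγ_def, hb_def, fracA _ _ _ _ _ hden hN]
  clear_value den N a b α β γ M
  have hdN : den * N ≠ 0 := mul_ne_zero hden hN
  have hM : M = bMat s t α β β γ - (1 / (q + 1)) • 1 := by
    ext u v
    cases u <;> cases v <;>
      · simp only [hM_def, lapKst, cMatKst, xVecKst, bMat, Matrix.add_apply, Matrix.neg_apply,
          Matrix.smul_apply, Matrix.sub_apply, Matrix.of_apply, Matrix.one_apply, Sum.elim_inl,
          Sum.elim_inr, hlam, Sum.inl.injEq, Sum.inr.injEq, smul_eq_mul, ← hden_def,
          ← ha_def, ← hb_def, hα_def, hβ_def, hγ_def, reduceCtorEq]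
        split_ifs <;> ring
  have hD : qDistKst F q s t = bMat s t (q+1) 1 1 (q+1) - (q + 1) • 1 := by
    ext u v
    cases u <;> cases v <;>
      · simp only [qDistKst, bMat, Matrix.sub_apply, Matrix.smul_apply, Matrix.of_apply,
          Matrix.one_apply, Sum.inl.injEq, Sum.inr.injEq, Sum.isLeft_inl, Sum.isLeft_inr,
          smul_eq_mul, reduceCtorEq]
        split_ifs <;> simp_all <;> ring
  have key : bMat s t (q+1) 1 1 (q+1) * bMat s t α β β γ =
      (1 / (q + 1)) • bMat s t (q+1) 1 1 (q+1) + (q + 1) • bMat s t α β β γ := by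
    rw [bMat_mul, bMat_smul, bMat_smul]
    ext u v
    cases u <;> cases v
    · simp only [bMat, Matrix.add_apply, Matrix.of_apply]
      rw [hα2, hβ2]
      refine keyA _ _ _ _ _ _ _ _ _ hdN hq ?_
      rw [hden_def, hN_def]; ring
    · simp only [bMat, Matrix.add_apply, Matrix.of_apply]
      rw [hβ2, hγ2]
      refine keyB _ _ _ _ _ _ _ _ _ hdN hq ?_
      rw [hden_def, hN_def]; ring
    · simp only [bMat, Matrix.add_apply, Matrix.of_apply]
      rw [hα2, hβ2]
      refine keyB _ _ _ _ _ _ _ _ _ hdN hq ?_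
      rw [hden_def, hN_def]; ring
    · simp only [bMat, Matrix.add_apply, Matrix.of_apply]
      rw [hβ2, hγ2]
      refine keyA _ _ _ _ _ _ _ _ _ hdN hq ?_
      rw [hden_def, hN_def]; ring
  have hDM : qDistKst F q s t * M = 1 := by
    rw [hD, hM, Matrix.sub_mul, Matrix.mul_sub, Matrix.mul_sub, Matrix.mul_smul,
      Matrix.mul_one, Matrix.smul_mul, Matrix.one_mul, Matrix.smul_mul, Matrix.one_mul,
      key, smul_smul, mul_one_div_cancel hq, one_smul]
    abel
  refine ⟨Matrix.isUnit_det_of_right_inverse hDM, ?_⟩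
  rw [Matrix.inv_eq_right_inv hDM]

theorem qDist_inv_eq_neg_lap_add_rankOne (F : Type*) [Field F] (q : F)
    (s t : ℕ) (hs : 1 ≤ s) (ht : 1 ≤ t) (hq : q + 1 ≠ 0)
    (hΔ : q ^ 2 * ((s : F) - 1) * ((t : F) - 1) - 1 ≠ 0)
    (hst : (q + 1) ^ 2 * ((s : F) - 1) * ((t : F) - 1) ≠ (s : F) * (t : F)) :
    IsUnit (qDistKst F q s t).det ∧
      (qDistKst F q s t)⁻¹ = -lapKst F q s t +
        (lamKst F q s t)⁻¹ • Matrix.of (fun u v => xVecKst F q s t u * xVecKst F q s t v) := by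
  exact qDist_inv_eq_neg_lap_add_rankOne' F q s t hq hΔ hst
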